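/- Let p > 0 and m_p the mean residual life function of the p-singular Cantor-type distribution. Then m_p(1/3) = (5p+4)/(6(2p+1)). -/

import Mathlib

open MeasureTheory Set Filter

/-- The CDF of the p-singular Cantor-type distribution: the monotone increasing
function on [0,1] with F(x/3) = F(x)/(p+1) for x ∈ [0,1] and
F(1-x) = 1 - p·F(x) for x ∈ [0,1/3]. -/
def IsCantorCDFp (p : ℝ) (F : ℝ → ℝ) : Prop :=
  Monotone F ∧
    (∀ x ∈ Set.Icc (0:ℝ) 1, F (x/3) = F x / (p+1)) ∧
    (∀ x ∈ Set.Icc (0:ℝ) (1/3), F (1-x) = 1 - p * F x)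

/-- The mean residual life function of a distribution with CDF F supported on [0,1]:
m(x) = (1/(1-F(x))) ∫_x^1 (1-F(u)) du  (equal to 0 at x = 1 by convention). -/
noncomputable def mrl (F : ℝ → ℝ) (x : ℝ) : ℝ :=
  (∫ u in x..(1:ℝ), (1 - F u)) / (1 - F x)

/-- For the p-singular Cantor-type distribution, m_p(1/3) = (5p+4)/(6(2p+1)). -/
theorem cantorp_mrl_at_third (p : ℝ) (hp : 0 < p) (F : ℝ → ℝ) (hF : IsCantorCDFp p F) :
    mrl F (1/3) = (5 * p + 4) / (6 * (2 * p + 1)) := by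
  obtain ⟨hm, h1, h2⟩ := hF
  have hp1 : p + 1 ≠ 0 := by linarith
  -- F 0 = 0
  have hF0 : F 0 = 0 := by
    have h := h1 0 ⟨le_refl 0, by norm_num⟩
    rw [show (0:ℝ)/3 = 0 by norm_num] at h
    field_simp at h
    have hmul : F 0 * p = 0 := by linear_combination h
    exact (mul_eq_zero.mp hmul).resolve_right hp.ne'
  -- F 1 = 1
  have hF1 : F 1 = 1 := by
    have := h2 0 ⟨le_refl 0, by norm_num⟩
    simpa [hF0] using this
  -- F (1/3)
  have hF13 : F (1/3) = 1 / (p+1) := by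
    have := h1 1 ⟨by norm_num, le_refl 1⟩
    simpa [hF1] using this
  -- F (2/3)
  have hF23 : F (2/3) = 1 / (p+1) := by
    have := h2 (1/3) ⟨by norm_num, le_refl _⟩
    rw [show (1:ℝ) - 1/3 = 2/3 by norm_num, hF13] at this
    rw [this]; field_simp; ring
  have hint : ∀ a b : ℝ, IntervalIntegrable F volume a b := fun a b =>
    hm.intervalIntegrable
  set I := ∫ u in (0:ℝ)..1, F u with hI
  -- left piece
  have hJ : ∫ u in (0:ℝ)..(1/3), F u = I / (3*(p+1)) := by
    have e1 := intervalIntegral.integral_comp_div (f := F) (a := 0) (b := 1) (c := 3)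
      (by norm_num)
    simp only [zero_div, smul_eq_mul] at e1
    have e2 : ∫ x in (0:ℝ)..1, F (x/3) = ∫ x in (0:ℝ)..1, F x / (p+1) := by
      apply intervalIntegral.integral_congr
      intro x hx
      rw [Set.uIcc_of_le (by norm_num : (0:ℝ) ≤ 1)] at hx
      exact h1 x hx
    have e3 : ∫ x in (0:ℝ)..1, F x / (p+1) = I / (p+1) := by
      rw [intervalIntegral.integral_div]
    rw [e2, e3] at e1
    field_simp at e1 ⊢
    linarith
  -- middle piece: F constant
  have hM : ∫ u in (1/3:ℝ)..(2/3), F u = 1 / (3*(p+1)) := by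
    have hc : ∀ x ∈ Set.uIcc (1/3:ℝ) (2/3), F x = 1/(p+1) := by
      intro x hx
      rw [Set.uIcc_of_le (by norm_num : (1/3:ℝ) ≤ 2/3)] at hx
      have l1 := hm hx.1
      have l2 := hm hx.2
      rw [hF13] at l1; rw [hF23] at l2
      linarith
    rw [intervalIntegral.integral_congr hc, intervalIntegral.integral_const, smul_eq_mul,
      show (2/3 - 1/3 : ℝ) = 1/3 by norm_num, div_mul_div_comm, one_mul]
  -- right piece
  have hR : ∫ u in (2/3:ℝ)..1, F u = 1/3 - p * (I / (3*(p+1))) := by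
    have e1 := intervalIntegral.integral_comp_sub_left (a := 0) (b := 1/3) F 1
    rw [show (1:ℝ)-1/3 = 2/3 by norm_num, sub_zero] at e1
    have e2 : ∫ x in (0:ℝ)..(1/3), F (1 - x) = ∫ x in (0:ℝ)..(1/3), (1 - p * F x) := by
      apply intervalIntegral.integral_congr
      intro x hx
      rw [Set.uIcc_of_le (by norm_num : (0:ℝ) ≤ 1/3)] at hx
      exact h2 x hx
    have e3 : ∫ x in (0:ℝ)..(1/3), (1 - p * F x) =
        1/3 - p * ∫ x in (0:ℝ)..(1/3), F x := by
      rw [intervalIntegral.integral_sub intervalIntegrable_const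
        ((hint 0 (1/3)).const_mul p)]
      rw [intervalIntegral.integral_const, intervalIntegral.integral_const_mul]
      norm_num
    rw [e2, e3, hJ] at e1
    linarith
  -- total
  have a2 : ∫ u in (1/3:ℝ)..1, F u = 1/(3*(p+1)) + (1/3 - p * (I/(3*(p+1)))) := by
    rw [← intervalIntegral.integral_add_adjacent_intervals (hint (1/3) (2/3)) (hint (2/3) 1),
      hM, hR]
  have htot : I = I/(3*(p+1)) + (1/(3*(p+1)) + (1/3 - p * (I/(3*(p+1))))) := by
    conv_lhs => rw [hI]
    rw [← intervalIntegral.integral_add_adjacent_intervals (hint 0 (1/3)) (hint (1/3) 1),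
      hJ, a2]
  have hIval : I = (p+2)/(4*p+2) := by
    have h42 : (4:ℝ)*p+2 ≠ 0 := by linarith
    field_simp at htot ⊢
    nlinarith [htot]
  -- numerator of mrl
  have hnum : ∫ u in (1/3:ℝ)..1, (1 - F u) =
      2/3 - (1/(3*(p+1)) + (1/3 - p * (((p+2)/(4*p+2)) / (3*(p+1))))) := by
    rw [intervalIntegral.integral_sub intervalIntegrable_const (hint (1/3) 1),
      intervalIntegral.integral_const, a2, hIval]
    norm_num
  rw [mrl, hnum, hF13]
  have h42 : (4:ℝ)*p+2 ≠ 0 := by linarith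
  have h21 : (2:ℝ)*p+1 ≠ 0 := by linarith
  have hne : 1 - 1/(p+1) ≠ 0 := by
    have h' : 1 - 1/(p+1) = p/(p+1) := by field_simp; ring
    rw [h']
    positivity
  have hpne : p ≠ 0 := hp.ne'
  field_simp
  ring_nf; field_simp
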